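/- Let d, q ≥ 1, let σ_0, …, σ_{q−1} be d×d density matrices, and let (Λ_0, …, Λ_{q−1}) be a POVM on ℂ^d such that Y := (1/q)·Σ_x σ_x Λ_x is Hermitian and Y − (1/q)·σ_y is positive semidefinite for every y ∈ {0, …, q−1}. For n ≥ 1 and a string x ∈ {0, …, q−1}^n, let σ^{(n)}_x be the matrix indexed by (Fin n → Fin d) × (Fin n → Fin d) with entries σ^{(n)}_x(u, v) = ∏_{j=1}^n σ_{x_j}(u_j, v_j), and let Y^{(n)} be the matrix with entries Y^{(n)}(u, v) = ∏_{j=1}^n Y(u_j, v_j). Then Y^{(n)} is Hermitian and Y^{(n)} − q^{−n}·σ^{(n)}_x is positive semidefinite for every x ∈ {0, …, q−1}^n; i.e., the n-fold tensor-power POVM satisfies the Holevo–Yuen–Kennedy–Lax sufficient optimality conditions for the product ensemble. -/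

import Mathlib

open Matrix Complex
open scoped ComplexOrder Kronecker

/-- The `n`-fold tensor power of a `d×d` matrix, realized as a matrix indexed by
`Fin n → Fin d` with entrywise products. -/
noncomputable def tensorPow {d : ℕ} (n : ℕ) (Y : Matrix (Fin d) (Fin d) ℂ) :
    Matrix (Fin n → Fin d) (Fin n → Fin d) ℂ :=
  Matrix.of fun u v => ∏ j, Y (u j) (v j)

/-- The tensor product `σ_{x₁} ⊗ ⋯ ⊗ σ_{xₙ}` of states along a string `x`. -/
noncomputable def tensorString {d q : ℕ} (n : ℕ) (σ : Fin q → Matrix (Fin d) (Fin d) ℂ)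
    (x : Fin n → Fin q) : Matrix (Fin n → Fin d) (Fin n → Fin d) ℂ :=
  Matrix.of fun u v => ∏ j, σ (x j) (u j) (v j)

lemma kron_psd {m n : Type*} [Fintype m] [Fintype n] {A : Matrix m m ℂ} {B : Matrix n n ℂ}
    (hA : A.PosSemidef) (hB : B.PosSemidef) : (A ⊗ₖ B).PosSemidef := by
  exact hA.kronecker hB

lemma smul_psd {n : Type*} [Fintype n] {A : Matrix n n ℂ} {c : ℝ} (hc : 0 ≤ c)
    (hA : A.PosSemidef) : ((c:ℂ) • A).PosSemidef := by
  constructor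
  · unfold Matrix.IsHermitian
    rw [Matrix.conjTranspose_smul, hA.1.eq]
    simp
  · exact (hA.smul (Complex.zero_le_real.mpr hc)).2

/-- the reindexing function for splitting off the first tensor factor -/
def splitFn (d n : ℕ) : (Fin (n+1) → Fin d) → Fin d × (Fin n → Fin d) :=
  fun u => (u 0, fun j => u j.succ)

lemma tensorPow_psd {d : ℕ} {Y : Matrix (Fin d) (Fin d) ℂ} (hY : Y.PosSemidef) :
    ∀ n, (tensorPow n Y).PosSemidef := by
  intro n
  induction n with
  | zero =>
    have h1 : tensorPow 0 Y = 1 := by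
      ext u v
      simp [tensorPow, Matrix.one_apply, Subsingleton.elim u v]
    rw [h1]
    exact Matrix.PosSemidef.one
  | succ n ih =>
    have h : tensorPow (n+1) Y = (Y ⊗ₖ tensorPow n Y).submatrix (splitFn d n) (splitFn d n) := by
      ext u v
      simp [tensorPow, splitFn, Matrix.kroneckerMap_apply, Fin.prod_univ_succ]
    rw [h]
    exact (kron_psd hY ih).submatrix _

lemma aux_psd {d q : ℕ} (hq : 0 < q) (σ : Fin q → Matrix (Fin d) (Fin d) ℂ)
    (hσ : ∀ x, (σ x).PosSemidef) (Y : Matrix (Fin d) (Fin d) ℂ) (hY : Y.PosSemidef)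
    (hYopt : ∀ y : Fin q, (Y - (q : ℂ)⁻¹ • σ y).PosSemidef) :
    ∀ n (x : Fin n → Fin q),
      (tensorPow n Y - ((q : ℂ) ^ n)⁻¹ • tensorString n σ x).PosSemidef := by
  have hqinv : (q : ℂ)⁻¹ = (((q : ℝ)⁻¹ : ℝ) : ℂ) := by push_cast; ring
  have hσs : ∀ y : Fin q, ((q : ℂ)⁻¹ • σ y).PosSemidef := by
    intro y
    rw [hqinv]
    exact smul_psd (by positivity) (hσ y)
  intro n
  induction n with
  | zero =>
    intro x
    have h0 : tensorPow 0 Y - ((q : ℂ) ^ 0)⁻¹ • tensorString 0 σ x = 0 := by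
      ext u v; simp [tensorPow, tensorString]
    rw [h0]
    exact Matrix.PosSemidef.zero
  | succ n ih =>
    intro x
    have hMpsd : (((Y - (q : ℂ)⁻¹ • σ (x 0)) ⊗ₖ tensorPow n Y) +
        (((q : ℂ)⁻¹ • σ (x 0)) ⊗ₖ
          (tensorPow n Y - ((q : ℂ) ^ n)⁻¹ • tensorString n σ (fun j => x j.succ)))).PosSemidef :=
      (kron_psd (hYopt (x 0)) (tensorPow_psd hY n)).add
        (kron_psd (hσs (x 0)) (ih (fun j => x j.succ)))
    have heq : tensorPow (n+1) Y - ((q : ℂ) ^ (n+1))⁻¹ • tensorString (n+1) σ x =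
        (((Y - (q : ℂ)⁻¹ • σ (x 0)) ⊗ₖ tensorPow n Y) +
          (((q : ℂ)⁻¹ • σ (x 0)) ⊗ₖ
            (tensorPow n Y - ((q : ℂ) ^ n)⁻¹ • tensorString n σ (fun j => x j.succ)))).submatrix
          (splitFn d n) (splitFn d n) := by
      ext u v
      simp only [tensorPow, tensorString, splitFn, Matrix.sub_apply, Matrix.smul_apply,
        Matrix.add_apply, Matrix.submatrix_apply, Matrix.kroneckerMap_apply, Matrix.of_apply,
        smul_eq_mul, Fin.prod_univ_succ, pow_succ]
      rw [mul_inv]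
      ring
    rw [heq]
    exact hMpsd.submatrix _

/-- If the POVM `(Λ₀, …, Λ_{q−1})` satisfies the Holevo–Yuen–Kennedy–Lax
conditions for the uniform ensemble `{(1/q, σ_x)}` (i.e. `Y = (1/q)·Σₓ σₓ Λₓ` is Hermitian and
`Y − (1/q)·σ_y ⪰ 0` for all `y`), then the `n`-fold tensor power satisfies them for the product
ensemble: `Y^{⊗n}` is Hermitian and `Y^{⊗n} − q^{−n}·σ^{⊗n}_x ⪰ 0` for every string `x`. -/
theorem stmt9 (d q n : ℕ) (hd : 1 ≤ d) (hq : 1 ≤ q) (hn : 1 ≤ n)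
    (σ : Fin q → Matrix (Fin d) (Fin d) ℂ)
    (hσ : ∀ x, (σ x).PosSemidef ∧ (σ x).trace = 1)
    (Λ : Fin q → Matrix (Fin d) (Fin d) ℂ)
    (hΛ : ∀ x, (Λ x).PosSemidef) (hΛsum : ∑ x, Λ x = 1)
    (Y : Matrix (Fin d) (Fin d) ℂ) (hYdef : Y = (q : ℂ)⁻¹ • ∑ x, σ x * Λ x)
    (hYH : Y.IsHermitian)
    (hYopt : ∀ y : Fin q, (Y - (q : ℂ)⁻¹ • σ y).PosSemidef) :
    (tensorPow n Y).IsHermitian ∧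
    ∀ x : Fin n → Fin q,
      (tensorPow n Y - ((q : ℂ) ^ n)⁻¹ • tensorString n σ x).PosSemidef := by
  have y0 : Fin q := ⟨0, hq⟩
  have hqinv : (q : ℂ)⁻¹ = (((q : ℝ)⁻¹ : ℝ) : ℂ) := by push_cast; ring
  have hσ0 : ((q : ℂ)⁻¹ • σ y0).PosSemidef := by
    rw [hqinv]; exact smul_psd (by positivity) (hσ y0).1
  have hY : Y.PosSemidef := by
    have := (hYopt y0).add hσ0
    simpa using this
  constructor
  · exact (tensorPow_psd hY n).1
  · exact aux_psd hq σ (fun x => (hσ x).1) Y hY hYopt n
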